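/- Trigonometric reproducing identity: for all t ∈ (−π/2, π/2), distinct i, j ∈ (−π/2, π/2), distinct r, s ∈ (−π/2, π/2), and a_i, a_j ∈ ℝ, one has Σ_{(r,s)} Σ_{(i,j)} a_i · [sin(r−j)/sin(i−j)] · [sin(t−s)/sin(r−s)] = Σ_{(i,j)} a_i · [sin(t−j)/sin(i−j)], where the outer sums run over the two orderings (r,s),(s,r) and the inner sums over the two orderings (i,j),(j,i). -/
import Mathlib


open Real

lemma sin_ne_zero_aux {x : ℝ} (h1 : -π < x) (h2 : x < π) (h0 : x ≠ 0) :
    Real.sin x ≠ 0 := by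
  rcases lt_or_gt_of_ne h0 with h | h
  · have : Real.sin (-x) > 0 := Real.sin_pos_of_pos_of_lt_pi (by linarith) (by linarith)
    rw [Real.sin_neg] at this; linarith
  · exact ne_of_gt (Real.sin_pos_of_pos_of_lt_pi h (by linarith))

/-- Trigonometric reproducing identity for the harmonic-oscillator flow. -/
theorem stmt_10 (t i j r s : ℝ)
    (ht : t ∈ Set.Ioo (-(π / 2)) (π / 2))
    (hi : i ∈ Set.Ioo (-(π / 2)) (π / 2)) (hj : j ∈ Set.Ioo (-(π / 2)) (π / 2))
    (hr : r ∈ Set.Ioo (-(π / 2)) (π / 2)) (hs : s ∈ Set.Ioo (-(π / 2)) (π / 2))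
    (hij : i ≠ j) (hrs : r ≠ s) (a_i a_j : ℝ) :
    (a_i * (sin (r - j) / sin (i - j)) * (sin (t - s) / sin (r - s)) +
        a_j * (sin (r - i) / sin (j - i)) * (sin (t - s) / sin (r - s))) +
      (a_i * (sin (s - j) / sin (i - j)) * (sin (t - r) / sin (s - r)) +
        a_j * (sin (s - i) / sin (j - i)) * (sin (t - r) / sin (s - r))) =
    a_i * (sin (t - j) / sin (i - j)) + a_j * (sin (t - i) / sin (j - i)) := by
  obtain ⟨hi1, hi2⟩ := hi; obtain ⟨hj1, hj2⟩ := hj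
  obtain ⟨hr1, hr2⟩ := hr; obtain ⟨hs1, hs2⟩ := hs
  have h1 : sin (i - j) ≠ 0 :=
    sin_ne_zero_aux (by linarith) (by linarith) (sub_ne_zero.mpr hij)
  have h2 : sin (r - s) ≠ 0 :=
    sin_ne_zero_aux (by linarith) (by linarith) (sub_ne_zero.mpr hrs)
  have e1 : sin (j - i) = -sin (i - j) := by rw [← Real.sin_neg]; ring_nf
  have e2 : sin (s - r) = -sin (r - s) := by rw [← Real.sin_neg]; ring_nf
  rw [e1, e2]
  have h1' : -sin (i - j) ≠ 0 := neg_ne_zero.mpr h1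
  have h2' : -sin (r - s) ≠ 0 := neg_ne_zero.mpr h2
  field_simp
  simp only [Real.sin_sub, Real.cos_sub]
  ring
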